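/- Let h > 0, θ ∈ (−π/2, π/2), ω = 2π, m a nonnegative integer, μ_{m+1} = (m+1)²ω²cos θ, and let ā : [0,h] → ℓ¹ be continuous with ‖ā‖_X = sup_{t∈[0,h]} ‖ā(t)‖_{ℓ¹} and 2‖ā‖_X ≠ μ_{m+1}. For 0 ≤ s ≤ t ≤ h define W^∞(t,s) = exp(−μ_{m+1}(t−s) + 2∫_s^t ‖ā(τ)‖_{ℓ¹} dτ), W_∞ = (exp((2‖ā‖_X − μ_{m+1})h) − 1)/(2‖ā‖_X − μ_{m+1}), and W̄_∞ = (W_∞ − h)/(2‖ā‖_X − μ_{m+1}). Then sup_{0≤s≤t≤h} ∫_s^t ∫_s^τ W^∞(τ,σ) dσ dτ ≤ W̄_∞. -/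
import Mathlib

open Real MeasureTheory intervalIntegral

private lemma exp_sub_linear_mono {c x y : ℝ} (hx : 0 ≤ x) (hxy : x ≤ y) :
    Real.exp (c * x) - c * x ≤ Real.exp (c * y) - c * y := by
  have h3 : Real.exp (c * y) = Real.exp (c * x) * Real.exp (c * (y - x)) := by
    rw [← Real.exp_add]; ring_nf
  have h2 : c * (y - x) + 1 ≤ Real.exp (c * (y - x)) := Real.add_one_le_exp _
  have key : 0 ≤ (Real.exp (c * x) - 1) * (c * (y - x)) := by
    rcases le_or_gt c 0 with hc | hc
    · have h4 : c * x ≤ 0 := mul_nonpos_of_nonpos_of_nonneg hc hx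
      have h5 : Real.exp (c * x) ≤ 1 := Real.exp_le_one_iff.mpr h4
      have h6 : c * (y - x) ≤ 0 := mul_nonpos_of_nonpos_of_nonneg hc (by linarith)
      nlinarith
    · have h5 : 1 ≤ Real.exp (c * x) := Real.one_le_exp (mul_nonneg hc.le hx)
      exact mul_nonneg (by linarith) (mul_nonneg hc.le (by linarith))
  nlinarith [Real.exp_pos (c * x)]

private lemma exp_integral_aux (c : ℝ) (hc : c ≠ 0) (d : ℝ) :
    ∫ x in (0:ℝ)..d, Real.exp (c * x) = (Real.exp (c * d) - 1) / c := by
  rw [intervalIntegral.integral_comp_mul_left (fun x => Real.exp x) hc]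
  simp [integral_exp, smul_eq_mul]
  ring

theorem Winfty_double_integral_bound
    (h θ : ℝ) (hh : 0 < h) (hθ : θ ∈ Set.Ioo (-(π / 2)) (π / 2)) (m : ℕ)
    (a : ℝ → lp (fun _ : ℤ => ℂ) 1) (ha : ContinuousOn a (Set.Icc 0 h))
    (μ nX Winf Wbar : ℝ)
    (hμ : μ = ((m : ℝ) + 1) ^ 2 * (2 * π) ^ 2 * Real.cos θ)
    (hnX : nX = sSup ((fun t => ‖a t‖) '' Set.Icc 0 h))
    (hne : 2 * nX ≠ μ)
    (hWinf : Winf = (Real.exp ((2 * nX - μ) * h) - 1) / (2 * nX - μ))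
    (hWbar : Wbar = (Winf - h) / (2 * nX - μ)) :
    ∀ s t : ℝ, 0 ≤ s → s ≤ t → t ≤ h →
      (∫ τ in s..t, ∫ σ in s..τ, Real.exp (-μ * (τ - σ) + 2 * ∫ r in σ..τ, ‖a r‖)) ≤ Wbar := by
  intro s t hs0 hst hth
  set c : ℝ := 2 * nX - μ with hcdef
  have hcne : c ≠ 0 := sub_ne_zero.mpr hne
  have hcn : ContinuousOn (fun r => ‖a r‖) (Set.Icc 0 h) := ha.norm
  have hsI : s ∈ Set.Icc (0:ℝ) h := ⟨hs0, hst.trans hth⟩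
  have htI : t ∈ Set.Icc (0:ℝ) h := ⟨hs0.trans hst, hth⟩
  have hInt : ∀ u v : ℝ, u ∈ Set.Icc (0:ℝ) h → v ∈ Set.Icc (0:ℝ) h →
      IntervalIntegrable (fun r => ‖a r‖) volume u v := fun u v hu hv =>
    (hcn.mono (Set.uIcc_subset_Icc hu hv)).intervalIntegrable
  have hbdd : BddAbove ((fun t => ‖a t‖) '' Set.Icc 0 h) :=
    (isCompact_Icc.image_of_continuousOn hcn).bddAbove
  have hnXb : ∀ r ∈ Set.Icc (0:ℝ) h, ‖a r‖ ≤ nX := fun r hr =>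
    hnX ▸ le_csSup hbdd ⟨r, hr, rfl⟩
  -- primitive of the norm
  set P : ℝ → ℝ := fun x => ∫ r in (0:ℝ)..x, ‖a r‖ with hPdef
  have hPc : ContinuousOn P (Set.Icc 0 h) := by
    have hI : IntegrableOn (fun r => ‖a r‖) (Set.uIcc 0 h) volume := by
      rw [Set.uIcc_of_le hh.le]; exact hcn.integrableOn_Icc
    simpa [Set.uIcc_of_le hh.le] using
      intervalIntegral.continuousOn_primitive_interval (a := 0) (b := h) hI
  have hPsub : ∀ u v : ℝ, u ∈ Set.Icc (0:ℝ) h → v ∈ Set.Icc (0:ℝ) h →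
      (∫ r in u..v, ‖a r‖) = P v - P u := fun u v hu hv =>
    (intervalIntegral.integral_interval_sub_left (hInt 0 v ⟨le_rfl, hh.le⟩ hv)
      (hInt 0 u ⟨le_rfl, hh.le⟩ hu)).symm
  -- step A : inner integral bound, for each τ ∈ [s,t]
  have stepA : ∀ τ ∈ Set.Icc s t,
      (∫ σ in s..τ, Real.exp (-μ * (τ - σ) + 2 * ∫ r in σ..τ, ‖a r‖))
        ≤ (Real.exp (c * (τ - s)) - 1) / c := by
    intro τ hτ
    have hτI : τ ∈ Set.Icc (0:ℝ) h := ⟨hs0.trans hτ.1, hτ.2.trans hth⟩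
    have hsub : Set.uIcc s τ ⊆ Set.Icc (0:ℝ) h := Set.uIcc_subset_Icc hsI hτI
    have hcontf : ContinuousOn
        (fun σ => Real.exp (-μ * (τ - σ) + 2 * ∫ r in σ..τ, ‖a r‖)) (Set.uIcc s τ) := by
      have h1 : ContinuousOn (fun σ => Real.exp (-μ * (τ - σ) + 2 * (P τ - P σ)))
          (Set.uIcc s τ) := by
        apply Real.continuous_exp.comp_continuousOn
        exact (continuousOn_const.mul (continuousOn_const.sub continuousOn_id)).add
          (continuousOn_const.mul (continuousOn_const.sub (hPc.mono hsub)))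
      apply h1.congr
      intro σ hσ
      simp only [hPsub σ τ (hsub hσ) hτI]
    have hfi : IntervalIntegrable
        (fun σ => Real.exp (-μ * (τ - σ) + 2 * ∫ r in σ..τ, ‖a r‖)) volume s τ :=
      hcontf.intervalIntegrable
    have hgi : IntervalIntegrable (fun σ => Real.exp (c * (τ - σ))) volume s τ :=
      (Real.continuous_exp.comp (continuous_const.mul (continuous_const.sub
        continuous_id))).intervalIntegrable s τ
    have hmono := intervalIntegral.integral_mono_on hτ.1 hfi hgi ?_
    · calc (∫ σ in s..τ, Real.exp (-μ * (τ - σ) + 2 * ∫ r in σ..τ, ‖a r‖))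
          ≤ ∫ σ in s..τ, Real.exp (c * (τ - σ)) := hmono
        _ = (Real.exp (c * (τ - s)) - 1) / c := by
            rw [intervalIntegral.integral_comp_sub_left (fun x => Real.exp (c * x)) τ]
            simp only [sub_self]
            exact exp_integral_aux c hcne (τ - s)
    · intro σ hσ
      have hσI : σ ∈ Set.Icc (0:ℝ) h := ⟨hs0.trans hσ.1, hσ.2.trans hτI.2⟩
      have hib : (∫ r in σ..τ, ‖a r‖) ≤ nX * (τ - σ) := by
        have := intervalIntegral.integral_mono_on hσ.2
          (hInt σ τ hσI hτI) (_root_.intervalIntegrable_const (c := nX))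
          (fun r hr => hnXb r ⟨hσI.1.trans hr.1, hr.2.trans hτI.2⟩)
        simpa [smul_eq_mul, mul_comm] using this
      apply Real.exp_le_exp.mpr
      have : c * (τ - σ) = -μ * (τ - σ) + 2 * (nX * (τ - σ)) := by rw [hcdef]; ring
      linarith
  -- integrability of the inner integral as a function of τ
  have hFeq : ∀ τ ∈ Set.Icc s t,
      (∫ σ in s..τ, Real.exp (-μ * (τ - σ) + 2 * ∫ r in σ..τ, ‖a r‖))
        = Real.exp (-μ * τ + 2 * P τ) * ∫ σ in s..τ, Real.exp (μ * σ - 2 * P σ) := by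
    intro τ hτ
    have hτI : τ ∈ Set.Icc (0:ℝ) h := ⟨hs0.trans hτ.1, hτ.2.trans hth⟩
    have hsub : Set.uIcc s τ ⊆ Set.Icc (0:ℝ) h := Set.uIcc_subset_Icc hsI hτI
    rw [← intervalIntegral.integral_const_mul]
    apply intervalIntegral.integral_congr
    intro σ hσ
    simp only [hPsub σ τ (hsub hσ) hτI, ← Real.exp_add]
    ring_nf
  have he : ContinuousOn (fun σ => Real.exp (μ * σ - 2 * P σ)) (Set.Icc 0 h) :=
    Real.continuous_exp.comp_continuousOn
      ((continuousOn_const.mul continuousOn_id).sub (continuousOn_const.mul hPc))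
  have hQc : ContinuousOn
      (fun τ => Real.exp (-μ * τ + 2 * P τ) * ∫ σ in s..τ, Real.exp (μ * σ - 2 * P σ))
      (Set.Icc s t) := by
    have hsub : Set.Icc s t ⊆ Set.Icc (0:ℝ) h := Set.Icc_subset_Icc hs0 hth
    have h1 : ContinuousOn (fun τ => Real.exp (-μ * τ + 2 * P τ)) (Set.Icc s t) :=
      Real.continuous_exp.comp_continuousOn
        (((continuousOn_const.mul continuousOn_id).add
          (continuousOn_const.mul (hPc.mono hsub))))
    have h2 : ContinuousOn (fun τ => ∫ σ in s..τ, Real.exp (μ * σ - 2 * P σ))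
        (Set.Icc s t) := by
      have hI : IntegrableOn (fun σ => Real.exp (μ * σ - 2 * P σ)) (Set.uIcc s t) volume := by
        rw [Set.uIcc_of_le hst]
        exact (he.mono hsub).integrableOn_Icc
      simpa [Set.uIcc_of_le hst] using
        intervalIntegral.continuousOn_primitive_interval (a := s) (b := t) hI
    exact h1.mul h2
  have hFc : ContinuousOn
      (fun τ => ∫ σ in s..τ, Real.exp (-μ * (τ - σ) + 2 * ∫ r in σ..τ, ‖a r‖))
      (Set.Icc s t) := hQc.congr hFeq
  have hFint : IntervalIntegrable
      (fun τ => ∫ σ in s..τ, Real.exp (-μ * (τ - σ) + 2 * ∫ r in σ..τ, ‖a r‖)) volume s t := by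
    apply ContinuousOn.intervalIntegrable
    rwa [Set.uIcc_of_le hst]
  have hGint : IntervalIntegrable (fun τ => (Real.exp (c * (τ - s)) - 1) / c) volume s t :=
    (((Real.continuous_exp.comp (continuous_const.mul (continuous_id.sub
      continuous_const))).sub continuous_const).div_const c).intervalIntegrable s t
  have houter := intervalIntegral.integral_mono_on hst hFint hGint stepA
  have hGval : (∫ τ in s..t, (Real.exp (c * (τ - s)) - 1) / c)
      = ((Real.exp (c * (t - s)) - 1) / c - (t - s)) / c := by
    have h1 : (∫ τ in s..t, Real.exp (c * (τ - s))) = (Real.exp (c * (t - s)) - 1) / c := by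
      rw [intervalIntegral.integral_comp_sub_right (fun x => Real.exp (c * x)) s]
      simp only [sub_self]
      exact exp_integral_aux c hcne (t - s)
    rw [intervalIntegral.integral_div, intervalIntegral.integral_sub _
      (_root_.intervalIntegrable_const (c := (1:ℝ))), h1]
    · simp [smul_eq_mul]
    · exact (Real.continuous_exp.comp (continuous_const.mul (continuous_id.sub
        continuous_const))).intervalIntegrable s t
  -- final comparison
  have hfin : ((Real.exp (c * (t - s)) - 1) / c - (t - s)) / c ≤ Wbar := by
    rw [hWbar, hWinf]
    have h1 : ∀ x : ℝ, ((Real.exp (c * x) - 1) / c - x) / c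
        = (Real.exp (c * x) - c * x - 1) / c ^ 2 := by
      intro x; field_simp; ring
    rw [h1 (t - s), h1 h]
    have hnum : Real.exp (c * (t - s)) - c * (t - s) ≤ Real.exp (c * h) - c * h :=
      exp_sub_linear_mono (by linarith) (by linarith)
    have hc2 : (0:ℝ) < c ^ 2 := by positivity
    gcongr
  calc (∫ τ in s..t, ∫ σ in s..τ, Real.exp (-μ * (τ - σ) + 2 * ∫ r in σ..τ, ‖a r‖))
      ≤ ∫ τ in s..t, (Real.exp (c * (τ - s)) - 1) / c := houter
    _ = ((Real.exp (c * (t - s)) - 1) / c - (t - s)) / c := hGval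
    _ ≤ Wbar := hfin
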